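/- Let P be a non-trivial product distribution on {0,1}ⁿ with σ_P² = Σ_j p_j(1-p_j) > 0. Sample x ∼ P and, independently, a coordinate j ∈ [n] with probability p_j(1-p_j)/σ_P² (squared-variance weights σ_j²/σ_P² where σ_j² = p_j(1-p_j)), and set y = x + e_j (flip coordinate j). Then for every u ∈ {0,1}ⁿ and every u-monotone function f : {0,1}ⁿ → {0,1}, Pr[f(x) ≠ f(y)] ≤ 1/σ_P. -/

import Mathlib

open Finset

namespace MonotoneEdgeAux

variable {n : ℕ}

noncomputable def W (p : Fin n → ℝ) (x : Fin n → Bool) : ℝ :=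
  ∏ i, if x i then p i else 1 - p i

noncomputable def phi (p : Fin n → ℝ) (j : Fin n) (x : Fin n → Bool) : ℝ :=
  ((if x j then (1 : ℝ) else 0) - p j) / Real.sqrt (p j * (1 - p j))

lemma W_nonneg {p : Fin n → ℝ} (hp : ∀ j, 0 < p j ∧ p j < 1) (x : Fin n → Bool) :
    0 ≤ W p x := by
  refine Finset.prod_nonneg fun i _ => ?_
  rcases hp i with ⟨h1, h2⟩
  cases hx : x i <;> simp <;> linarith

/-- flip coordinate `j` as an equivalence -/
def flipE (j : Fin n) : (Fin n → Bool) ≃ (Fin n → Bool) :=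
  Function.Involutive.toPerm (fun x => Function.update x j (!(x j)))
    (fun x => by
      funext i
      rcases eq_or_ne i j with rfl | h
      · simp
      · simp [Function.update_apply, h])

lemma sum_split (j : Fin n) (g : (Fin n → Bool) → ℝ) :
    ∑ x : Fin n → Bool, g x
      = ∑ x : Fin n → Bool,
          if x j then 0 else g x + g (Function.update x j true) := by
  have h1 : ∑ x : Fin n → Bool, (if x j then g x else 0)
      = ∑ x : Fin n → Bool, (if x j then 0 else g (Function.update x j true)) := by
    rw [← Equiv.sum_comp (flipE j) (fun x => if x j then g x else 0)]
    refine Finset.sum_congr rfl fun x _ => ?_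
    have hfe : (flipE j) x = Function.update x j (!(x j)) := rfl
    rw [hfe]
    cases hx : x j <;> simp [hx]
  calc ∑ x : Fin n → Bool, g x
      = ∑ x : Fin n → Bool, ((if x j then 0 else g x) + (if x j then g x else 0)) := by
        refine Finset.sum_congr rfl fun x _ => ?_
        cases hx : x j <;> simp [hx]
    _ = _ := by
        rw [Finset.sum_add_distrib, h1, ← Finset.sum_add_distrib]
        refine Finset.sum_congr rfl fun x _ => ?_
        cases hx : x j <;> simp [hx]

lemma sum_factor (g : Fin n → Bool → ℝ) :
    ∑ x : Fin n → Bool, ∏ i, g i (x i) = ∏ i, (g i true + g i false) := by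
  rw [← Fintype.prod_sum g]
  exact Finset.prod_congr rfl fun i _ => by simp

lemma sum_W {p : Fin n → ℝ} (hp : ∀ j, 0 < p j ∧ p j < 1) :
    ∑ x : Fin n → Bool, W p x = 1 := by
  unfold W
  rw [sum_factor (fun i b => if b then p i else 1 - p i)]
  refine Finset.prod_eq_one fun i _ => by simp

lemma ortho {p : Fin n → ℝ} (hp : ∀ j, 0 < p j ∧ p j < 1) (j k : Fin n) :
    ∑ x : Fin n → Bool, W p x * phi p j x * phi p k x
      = if j = k then (1 : ℝ) else 0 := by
  have hpt : ∀ i : Fin n, 0 < p i * (1 - p i) := fun i => by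
    rcases hp i with ⟨h1, h2⟩; exact mul_pos h1 (by linarith)
  have hs : ∀ i : Fin n, (0:ℝ) < Real.sqrt (p i * (1 - p i)) :=
    fun i => Real.sqrt_pos.2 (hpt i)
  have hss : ∀ i : Fin n, Real.sqrt (p i * (1 - p i)) * Real.sqrt (p i * (1 - p i))
      = p i * (1 - p i) := fun i => Real.mul_self_sqrt (hpt i).le
  have hpoint : ∀ x : Fin n → Bool, W p x * phi p j x * phi p k x
      = ∏ i, ((if x i then p i else 1 - p i)
          * (if i = j then ((if x i then (1:ℝ) else 0) - p j) / Real.sqrt (p j * (1 - p j)) else 1)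
          * (if i = k then ((if x i then (1:ℝ) else 0) - p k) / Real.sqrt (p k * (1 - p k)) else 1)) := by
    intro x
    rw [Finset.prod_mul_distrib, Finset.prod_mul_distrib]
    rw [Fintype.prod_ite_eq' j, Fintype.prod_ite_eq' k]
    rfl
  simp_rw [hpoint]
  rw [sum_factor (fun i b => (if b then p i else 1 - p i)
      * (if i = j then ((if b then (1:ℝ) else 0) - p j) / Real.sqrt (p j * (1 - p j)) else 1)
      * (if i = k then ((if b then (1:ℝ) else 0) - p k) / Real.sqrt (p k * (1 - p k)) else 1))]
  rcases eq_or_ne j k with rfl | hjk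
  · rw [if_pos (rfl : j = j)]
    apply Finset.prod_eq_one
    intro i _
    rcases eq_or_ne i j with rfl | h
    · simp only [if_pos rfl]
      have h1 := hs i
      have h2 : Real.sqrt (p i - p i ^ 2) ^ 2 = p i - p i ^ 2 :=
        Real.sq_sqrt (by nlinarith [hpt i])
      simp only [if_true, if_false, Bool.false_eq_true]
      field_simp
      nlinarith [hpt i, h2, hss i]
    · simp only [if_neg h]
      simp
  · rw [if_neg hjk]
    apply Finset.prod_eq_zero (Finset.mem_univ j)
    simp only [if_pos rfl, if_neg hjk]
    have h1 := hs j
    have h2 : Real.sqrt (p j - p j ^ 2) ^ 2 = p j - p j ^ 2 :=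
      Real.sq_sqrt (by nlinarith [hpt j])
    simp only [if_true, if_false, Bool.false_eq_true]
    field_simp
    nlinarith [h2, hss j, hpt j]

lemma bessel_core {α ι : Type*} [Fintype α] [Fintype ι] [DecidableEq ι]
    (w : α → ℝ) (hw : ∀ x, 0 ≤ w x) (φ : ι → α → ℝ)
    (hortho : ∀ j k, ∑ x : α, w x * φ j x * φ k x = if j = k then (1:ℝ) else 0)
    (F : α → ℝ) :
    ∑ j : ι, (∑ x : α, w x * F x * φ j x) ^ 2 ≤ ∑ x : α, w x * F x ^ 2 := by
  obtain ⟨c, hc⟩ : ∃ c : ι → ℝ, ∀ j, c j = ∑ x : α, w x * F x * φ j x :=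
    ⟨_, fun j => rfl⟩
  have key : 0 ≤ ∑ x : α, w x * (F x - ∑ j, c j * φ j x) ^ 2 :=
    Finset.sum_nonneg fun x _ => mul_nonneg (hw x) (sq_nonneg _)
  have hFB : ∑ x : α, w x * F x * (∑ j, c j * φ j x) = ∑ j, c j ^ 2 := by
    simp_rw [Finset.mul_sum]
    rw [Finset.sum_comm]
    refine Finset.sum_congr rfl fun j _ => ?_
    have h : ∀ x, w x * F x * (c j * φ j x) = c j * (w x * F x * φ j x) :=
      fun x => by ring
    simp_rw [h, ← Finset.mul_sum, ← hc, sq]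
  have hBB : ∑ x : α, w x * (∑ j, c j * φ j x) ^ 2 = ∑ j, c j ^ 2 := by
    have hsq : ∀ x : α, (∑ j, c j * φ j x) ^ 2
        = ∑ j, ∑ k, (c j * φ j x) * (c k * φ k x) := by
      intro x; rw [sq, Finset.sum_mul_sum]
    simp_rw [hsq, Finset.mul_sum]
    rw [Finset.sum_comm]
    refine Finset.sum_congr rfl fun j _ => ?_
    rw [Finset.sum_comm]
    have h : ∀ k x, w x * (c j * φ j x * (c k * φ k x))
        = (c j * c k) * (w x * φ j x * φ k x) := fun k x => by ring
    simp_rw [h, ← Finset.mul_sum, hortho]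
    simp [sq]
  have expand : ∑ x : α, w x * (F x - ∑ j, c j * φ j x) ^ 2
      = ∑ x : α, w x * F x ^ 2 - 2 * (∑ j, c j ^ 2) + ∑ j, c j ^ 2 := by
    have h : ∀ x : α, w x * (F x - ∑ j, c j * φ j x) ^ 2
        = w x * F x ^ 2 - 2 * (w x * F x * (∑ j, c j * φ j x))
            + w x * (∑ j, c j * φ j x) ^ 2 := fun x => by ring
    simp_rw [h]
    rw [Finset.sum_add_distrib, Finset.sum_sub_distrib, ← Finset.mul_sum, hFB, hBB]
  have : ∑ j, c j ^ 2 ≤ ∑ x : α, w x * F x ^ 2 := by linarith [key, expand]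
  simpa [hc] using this

lemma edge_eq {p : Fin n → ℝ} (hp : ∀ j, 0 < p j ∧ p j < 1)
    (u : Fin n → Bool) (f : (Fin n → Bool) → Bool)
    (hf : ∀ (x : Fin n → Bool) (j : Fin n),
      f (fun i => xor (Function.update x j false i) (u i)) ≤
        f (fun i => xor (Function.update x j true i) (u i)))
    (j : Fin n) :
    Real.sqrt (p j * (1 - p j)) *
        (∑ x : Fin n → Bool, W p x *
          (if f x ≠ f (Function.update x j (!(x j))) then (1:ℝ) else 0))
      = |∑ x : Fin n → Bool,
          W p x * (if f x then (1:ℝ) else 0) * phi p j x| := by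
  have hpj : 0 < p j * (1 - p j) := by
    rcases hp j with ⟨h1, h2⟩; exact mul_pos h1 (by linarith)
  set s : ℝ := Real.sqrt (p j * (1 - p j)) with hsdef
  have hs : 0 < s := Real.sqrt_pos.2 hpj
  have hss : s * s = p j * (1 - p j) := Real.mul_self_sqrt hpj.le
  -- monotonicity in usable form
  have hmono : ∀ y : Fin n → Bool,
      f (Function.update y j (u j)) ≤ f (Function.update y j (!(u j))) := by
    intro y
    have h := hf (fun i => xor (y i) (u i)) j
    have e : ∀ b : Bool,
        (fun i => xor (Function.update (fun i => xor (y i) (u i)) j b i) (u i))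
          = Function.update y j (xor b (u j)) := by
      intro b; funext i
      rcases eq_or_ne i j with rfl | hij
      · simp
      · simp [Function.update_apply, hij, Bool.xor_assoc]
    rw [e false, e true] at h
    simpa using h
  -- the reduced product over the other coordinates
  obtain ⟨R, hRdef⟩ : ∃ R : (Fin n → Bool) → ℝ,
      ∀ x, R x = ∏ i ∈ Finset.univ.erase j, (if x i then p i else 1 - p i) :=
    ⟨_, fun _ => rfl⟩
  have hRnn : ∀ x, 0 ≤ R x := by
    intro x; rw [hRdef]
    refine Finset.prod_nonneg fun i _ => ?_
    rcases hp i with ⟨h1, h2⟩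
    cases hx : x i <;> simp <;> linarith
  have hW : ∀ x : Fin n → Bool, W p x = (if x j then p j else 1 - p j) * R x := by
    intro x
    rw [W, hRdef, ← Finset.mul_prod_erase Finset.univ _ (Finset.mem_univ j)]
  have hRup : ∀ (x : Fin n → Bool) (b : Bool), R (Function.update x j b) = R x := by
    intro x b
    rw [hRdef, hRdef]
    refine Finset.prod_congr rfl fun i hi => ?_
    rw [Function.update_of_ne (Finset.ne_of_mem_erase hi)]
  rw [sum_split j (fun x => W p x *
        (if f x ≠ f (Function.update x j (!(x j))) then (1:ℝ) else 0)),
      sum_split j (fun x => W p x * (if f x then (1:ℝ) else 0) * phi p j x)]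
  set ε : ℝ := if u j then -1 else 1 with hεdef
  have key : ∀ x : Fin n → Bool, x j = false →
      (W p x * (if f x ≠ f (Function.update x j (!(x j))) then (1:ℝ) else 0)
        + W p (Function.update x j true) *
            (if f (Function.update x j true) ≠
                f (Function.update (Function.update x j true) j
                  (!(Function.update x j true j))) then (1:ℝ) else 0)
        = R x * (if f x ≠ f (Function.update x j true) then (1:ℝ) else 0))
      ∧ (W p x * (if f x then (1:ℝ) else 0) * phi p j x
        + W p (Function.update x j true) *
            (if f (Function.update x j true) then (1:ℝ) else 0) *
            phi p j (Function.update x j true)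
        = (s * ε) * (R x * (if f x ≠ f (Function.update x j true) then (1:ℝ) else 0))) := by
    intro x hxj
    have hupf : Function.update x j false = x := by
      rw [← hxj]; exact Function.update_eq_self j x
    have hx1j : Function.update x j true j = true := Function.update_self j true x
    have hflip : Function.update (Function.update x j true) j
        (!(Function.update x j true j)) = x := by
      rw [hx1j, Bool.not_true, Function.update_idem, hupf]
    have hWx : W p x = (1 - p j) * R x := by rw [hW, hxj]; simp
    have hWx1 : W p (Function.update x j true) = p j * R x := by
      rw [hW, hx1j, hRup]; simp
    have hphix : phi p j x = (0 - p j) / s := by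
      rw [phi, hxj]; simp [hsdef]
    have hphix1 : phi p j (Function.update x j true) = (1 - p j) / s := by
      rw [phi, hx1j]; simp [hsdef]
    have hdiff : (if f (Function.update x j true) then (1:ℝ) else 0)
        - (if f x then (1:ℝ) else 0)
        = ε * (if f x ≠ f (Function.update x j true) then (1:ℝ) else 0) := by
      have hm := hmono x
      rw [hεdef]
      cases hu : u j
      · rw [hu] at hm
        simp only [Bool.not_false] at hm
        rw [hupf] at hm
        cases h0 : f x <;> cases h1 : f (Function.update x j true) <;>
          simp_all <;> exact absurd hm (by decide)
      · rw [hu] at hm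
        simp only [Bool.not_true] at hm
        rw [hupf] at hm
        cases h0 : f x <;> cases h1 : f (Function.update x j true) <;>
          simp_all <;> exact absurd hm (by decide)
    constructor
    · rw [hWx, hWx1, hflip]
      have e1 : (!(x j)) = true := by simp [hxj]
      rw [e1]
      have e2 : (if f (Function.update x j true) ≠ f x then (1:ℝ) else 0)
          = (if f x ≠ f (Function.update x j true) then (1:ℝ) else 0) := by
        by_cases h : f x = f (Function.update x j true)
        · simp [h]
        · simp [h, Ne.symm h]
      rw [e2]
      ring
    · rw [hWx, hWx1, hphix, hphix1]
      have hstep : (1 - p j) * R x * (if f x then (1:ℝ) else 0) * ((0 - p j) / s)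
          + p j * R x * (if f (Function.update x j true) then (1:ℝ) else 0) * ((1 - p j) / s)
          = (p j * (1 - p j) / s) * R x *
              ((if f (Function.update x j true) then (1:ℝ) else 0)
                - (if f x then (1:ℝ) else 0)) := by ring
      rw [hstep, hdiff]
      rw [show p j * (1 - p j) / s = s by rw [← hss]; field_simp]
      ring
  have hT : ∀ x : Fin n → Bool,
      (if x j then (0:ℝ) else
        W p x * (if f x then (1:ℝ) else 0) * phi p j x
        + W p (Function.update x j true) *
            (if f (Function.update x j true) then (1:ℝ) else 0) *
            phi p j (Function.update x j true))
      = (s * ε) * (if x j then (0:ℝ) else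
          R x * (if f x ≠ f (Function.update x j true) then (1:ℝ) else 0)) := by
    intro x
    by_cases hxj : x j = true
    · simp [hxj]
    · have hxj' : x j = false := by simpa using hxj
      simp only [if_neg hxj]
      exact (key x hxj').2
  have hT2 : ∀ x : Fin n → Bool,
      (if x j then (0:ℝ) else
        W p x * (if f x ≠ f (Function.update x j (!(x j))) then (1:ℝ) else 0)
        + W p (Function.update x j true) *
            (if f (Function.update x j true) ≠
                f (Function.update (Function.update x j true) j
                  (!(Function.update x j true j))) then (1:ℝ) else 0))
      = (if x j then (0:ℝ) else
          R x * (if f x ≠ f (Function.update x j true) then (1:ℝ) else 0)) := by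
    intro x
    by_cases hxj : x j = true
    · simp [hxj]
    · have hxj' : x j = false := by simpa using hxj
      simp only [if_neg hxj]
      exact (key x hxj').1
  simp_rw [hT, hT2, ← Finset.mul_sum]
  have hTnn : 0 ≤ ∑ x : Fin n → Bool, (if x j then (0:ℝ) else
      R x * (if f x ≠ f (Function.update x j true) then (1:ℝ) else 0)) := by
    refine Finset.sum_nonneg fun x _ => ?_
    by_cases hxj : x j = true
    · simp [hxj]
    · simp only [if_neg hxj]
      exact mul_nonneg (hRnn x) (by positivity)
  rw [abs_mul, abs_mul]
  rw [abs_of_nonneg hs.le, abs_of_nonneg hTnn]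
  have : |ε| = 1 := by rw [hεdef]; cases u j <;> simp
  rw [this]
  ring

end MonotoneEdgeAux

open MonotoneEdgeAux in
/-- Sample `x ∼ P` (a non-trivial product distribution on `{0,1}ⁿ`) and flip a
random coordinate `j` chosen with probability `p_j(1-p_j)/σ_P²` to obtain `y`.
Then for every `u` and every `u`-monotone `f : {0,1}ⁿ → {0,1}`,
`Pr[f(x) ≠ f(y)] ≤ 1/σ_P`. -/
theorem monotone_edge_bound (n : ℕ) (p : Fin n → ℝ)
    (hp : ∀ j, 0 < p j ∧ p j < 1)
    (u : Fin n → Bool) (f : (Fin n → Bool) → Bool)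
    (hf : ∀ (x : Fin n → Bool) (j : Fin n),
      f (fun i => xor (Function.update x j false i) (u i)) ≤
        f (fun i => xor (Function.update x j true i) (u i))) :
    (∑ x : Fin n → Bool, (∏ i, if x i then p i else 1 - p i) *
        ∑ j : Fin n, (p j * (1 - p j) / ∑ i, p i * (1 - p i)) *
          (if f x ≠ f (Function.update x j (!(x j))) then (1 : ℝ) else 0)) ≤
      1 / Real.sqrt (∑ i, p i * (1 - p i)) := by
  rcases Nat.eq_zero_or_pos n with hn | hn
  · subst hn
    simp
  · have hnon : (Finset.univ : Finset (Fin n)).Nonempty := ⟨⟨0, hn⟩, Finset.mem_univ _⟩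
    have hpt : ∀ i : Fin n, 0 < p i * (1 - p i) := fun i => by
      rcases hp i with ⟨h1, h2⟩; exact mul_pos h1 (by linarith)
    have hS : 0 < ∑ i, p i * (1 - p i) := Finset.sum_pos (fun i _ => hpt i) hnon
    set S : ℝ := ∑ i, p i * (1 - p i) with hSdef
    show (∑ x : Fin n → Bool, W p x *
        ∑ j : Fin n, (p j * (1 - p j) / S) *
          (if f x ≠ f (Function.update x j (!(x j))) then (1:ℝ) else 0)) ≤
      1 / Real.sqrt S
    have hswap : (∑ x : Fin n → Bool, W p x *
        ∑ j : Fin n, (p j * (1 - p j) / S) *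
          (if f x ≠ f (Function.update x j (!(x j))) then (1:ℝ) else 0))
        = ∑ j : Fin n, (p j * (1 - p j) / S) *
            ∑ x : Fin n → Bool, W p x *
              (if f x ≠ f (Function.update x j (!(x j))) then (1:ℝ) else 0) := by
      simp_rw [Finset.mul_sum]
      rw [Finset.sum_comm]
      refine Finset.sum_congr rfl fun j _ => ?_
      exact Finset.sum_congr rfl fun x _ => by ring
    rw [hswap]
    have hper : ∀ j : Fin n, (p j * (1 - p j) / S) *
        ∑ x : Fin n → Bool, W p x *
          (if f x ≠ f (Function.update x j (!(x j))) then (1:ℝ) else 0)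
        = (Real.sqrt (p j * (1 - p j)) *
            |∑ x : Fin n → Bool, W p x * (if f x then (1:ℝ) else 0) * phi p j x|) / S := by
      intro j
      have he := edge_eq hp u f hf j
      have hss : Real.sqrt (p j * (1 - p j)) * Real.sqrt (p j * (1 - p j))
          = p j * (1 - p j) := Real.mul_self_sqrt (hpt j).le
      conv_lhs => rw [← hss]
      rw [← he]
      ring
    rw [Finset.sum_congr rfl fun j _ => hper j, ← Finset.sum_div]
    have hnn : 0 ≤ ∑ j : Fin n, Real.sqrt (p j * (1 - p j)) *
        |∑ x : Fin n → Bool, W p x * (if f x then (1:ℝ) else 0) * phi p j x| :=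
      Finset.sum_nonneg fun j _ => mul_nonneg (Real.sqrt_nonneg _) (abs_nonneg _)
    have hle : (∑ j : Fin n, Real.sqrt (p j * (1 - p j)) *
        |∑ x : Fin n → Bool, W p x * (if f x then (1:ℝ) else 0) * phi p j x|)
        ≤ Real.sqrt S := by
      rw [Real.le_sqrt hnn hS.le]
      calc (∑ j : Fin n, Real.sqrt (p j * (1 - p j)) *
            |∑ x : Fin n → Bool, W p x * (if f x then (1:ℝ) else 0) * phi p j x|) ^ 2
          ≤ (∑ j : Fin n, Real.sqrt (p j * (1 - p j)) ^ 2) *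
            (∑ j : Fin n,
              |∑ x : Fin n → Bool, W p x * (if f x then (1:ℝ) else 0) * phi p j x| ^ 2) :=
            Finset.sum_mul_sq_le_sq_mul_sq Finset.univ _ _
        _ = S * ∑ j : Fin n,
              (∑ x : Fin n → Bool, W p x * (if f x then (1:ℝ) else 0) * phi p j x) ^ 2 := by
            rw [hSdef]
            congr 1
            · exact Finset.sum_congr rfl fun j _ => Real.sq_sqrt (hpt j).le
            · exact Finset.sum_congr rfl fun j _ => sq_abs _
        _ ≤ S * 1 := by
            have hb := bessel_core (W p) (W_nonneg hp) (phi p) (ortho hp)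
              (fun x => if f x then (1:ℝ) else 0)
            have hb2 : ∑ x : Fin n → Bool, W p x * (if f x then (1:ℝ) else 0) ^ 2 ≤ 1 := by
              calc ∑ x : Fin n → Bool, W p x * (if f x then (1:ℝ) else 0) ^ 2
                  ≤ ∑ x : Fin n → Bool, W p x * 1 :=
                    Finset.sum_le_sum fun x _ => mul_le_mul_of_nonneg_left
                      (by by_cases h : f x <;> simp [h]) (W_nonneg hp x)
                _ = 1 := by simpa using sum_W hp
            exact mul_le_mul_of_nonneg_left (hb.trans hb2) hS.le
        _ = S := mul_one S
    have hfin : Real.sqrt S / S = 1 / Real.sqrt S := by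
      rw [eq_div_iff (Real.sqrt_pos.2 hS).ne', div_mul_eq_mul_div,
        Real.mul_self_sqrt hS.le, div_self hS.ne']
    calc (∑ j : Fin n, Real.sqrt (p j * (1 - p j)) *
          |∑ x : Fin n → Bool, W p x * (if f x then (1:ℝ) else 0) * phi p j x|) / S
        ≤ Real.sqrt S / S := (div_le_div_iff_of_pos_right hS).mpr hle
      _ = 1 / Real.sqrt S := hfin
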